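/- Let Π_1,…,Π_m be orthogonal projections on ℂ^N with d_i := Tr(Π_i) ≥ 1, let ψ be a density matrix, and let (w_s, φ(s))_{s∈S} be a finitely supported random tuple of rank-one states in the ranges of the Π_i satisfying the first-moment, 2-design second-moment, and pairwise-independence assumptions. Then the expected variance of the altered Hamiltonians satisfies Σ_{s∈S} w_s · Var_ψ(H_{φ(s)}) ≥ Var_ψ( Σ_{i=1}^m (1 + 1/d_i) Π_i ) + Σ_{i=1}^m ((d_i − 1)/(d_i (d_i + 1))) · Tr(Π_i ψ). -/

import Mathlib

open Matrix Kronecker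
open scoped ComplexOrder

/-- The variance `Var_ψ(G) = Tr(G²ψ) − (Tr(Gψ))²` of a (Hermitian) observable `G`
in the (density-matrix) state `ψ`, as a real number. -/
noncomputable def matVar {N : ℕ} (ψ G : Matrix (Fin N) (Fin N) ℂ) : ℝ :=
  ((G * G * ψ).trace).re - (((G * ψ).trace).re) ^ 2

/-- The swap matrix `S_N` on `ℂ^N ⊗ ℂ^N`, with entries
`(S_N)_{(i,j),(k,l)} = 1` iff `i = l` and `j = k`. -/
noncomputable def swapMat (N : ℕ) : Matrix (Fin N × Fin N) (Fin N × Fin N) ℂ :=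
  Matrix.of fun p q => if p.1 = q.2 ∧ p.2 = q.1 then 1 else 0

noncomputable def contrMat {N : ℕ} (ψ : Matrix (Fin N) (Fin N) ℂ) :
    Matrix (Fin N × Fin N) (Fin N × Fin N) ℂ :=
  Matrix.of fun p q => if q.2 = p.1 then ψ p.2 q.1 else 0

lemma trace_swap_kron {N : ℕ} (A B : Matrix (Fin N) (Fin N) ℂ) :
    ((swapMat N) * (A ⊗ₖ B)).trace = (A * B).trace := by
  simp only [Matrix.trace, Matrix.diag, Matrix.mul_apply, swapMat, Matrix.of_apply,
    kroneckerMap_apply, Fintype.sum_prod_type, ite_mul, one_mul, zero_mul]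
  simp only [ite_and, Finset.sum_ite_eq, Finset.sum_ite_eq', Finset.mem_univ, if_true]
  rw [Finset.sum_comm]

lemma trace_kron_contr {N : ℕ} (A B ψ : Matrix (Fin N) (Fin N) ℂ) :
    ((A ⊗ₖ B) * contrMat ψ).trace = (A * B * ψ).trace := by
  simp only [Matrix.trace, Matrix.diag, Matrix.mul_apply, contrMat, Matrix.of_apply,
    kroneckerMap_apply, Fintype.sum_prod_type, mul_ite, mul_zero]
  have h : ∀ x x1 : Fin N,
      (∑ x2 : Fin N, ∑ x3 : Fin N, if x1 = x2 then A x x2 * B x1 x3 * ψ x3 x else 0)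
      = ∑ x3 : Fin N, ∑ x2 : Fin N, if x1 = x2 then A x x2 * B x1 x3 * ψ x3 x else 0 :=
    fun x x1 => Finset.sum_comm
  simp only [h, Finset.sum_ite_eq, Finset.mem_univ, if_true, Finset.sum_mul]
  exact Finset.sum_congr rfl fun x _ => Finset.sum_comm

lemma trace_mul_real {n : ℕ} {G ψ : Matrix (Fin n) (Fin n) ℂ}
    (hG : G.IsHermitian) (hψ : ψ.IsHermitian) :
    (G * ψ).trace = ((((G * ψ).trace).re : ℝ) : ℂ) := by
  have h : (starRingEnd ℂ) ((G * ψ).trace) = (G * ψ).trace := by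
    have := Matrix.trace_conjTranspose (G * ψ)
    rw [Matrix.conjTranspose_mul, hG.eq, hψ.eq, Matrix.trace_mul_comm] at this
    simpa using this.symm
  exact (Complex.conj_eq_iff_re.mp h).symm

lemma psd_trace_re_nonneg {n : ℕ} {M : Matrix (Fin n) (Fin n) ℂ} (hM : M.PosSemidef) :
    0 ≤ (M.trace).re := by
  have hdiag : ∀ i, 0 ≤ M i i := fun i => by
    exact hM.diag_nonneg
  rw [Matrix.trace, Complex.re_sum]
  exact Finset.sum_nonneg fun i _ => (Complex.le_def.mp (hdiag i)).1

lemma psd_trace_sq_le {n : ℕ} {M : Matrix (Fin n) (Fin n) ℂ} (hM : M.PosSemidef) :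
    ((M * M).trace).re ≤ ((M.trace).re) ^ 2 := by
  have hH := hM.isHermitian
  set U : Matrix (Fin n) (Fin n) ℂ := (hH.eigenvectorUnitary : Matrix (Fin n) (Fin n) ℂ) with hUdef
  set D : Matrix (Fin n) (Fin n) ℂ := Matrix.diagonal (Complex.ofReal ∘ hH.eigenvalues) with hDdef
  have hspec : M = U * D * Uᴴ := hH.spectral_theorem
  have hUU : Uᴴ * U = 1 := by
    simpa [hUdef, Matrix.star_eq_conjTranspose] using hH.eigenvectorUnitary.2.1
  have htr : M.trace = D.trace := by
    rw [hspec, Matrix.trace_mul_cycle, hUU, Matrix.one_mul]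
  have htr2 : (M * M).trace = (D * D).trace := by
    have : M * M = U * (D * (Uᴴ * U) * D) * Uᴴ := by
      rw [hspec]; noncomm_ring
    rw [this, hUU, Matrix.mul_one, Matrix.trace_mul_cycle, hUU, Matrix.one_mul]
  have hDD : D * D = Matrix.diagonal (fun i => ((hH.eigenvalues i : ℂ)) ^ 2) := by
    rw [hDdef, Matrix.diagonal_mul_diagonal]
    congr 1; funext i; simp [pow_two]
  rw [htr, htr2, hDD, Matrix.trace_diagonal, Matrix.trace_diagonal]
  have h1 : (∑ i, ((hH.eigenvalues i : ℂ)) ^ 2) = (((∑ i, (hH.eigenvalues i) ^ 2 : ℝ)) : ℂ) := by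
    push_cast; ring
  have h2 : (∑ i, ((Complex.ofReal ∘ hH.eigenvalues) i)) =
      (((∑ i, hH.eigenvalues i : ℝ)) : ℂ) := by
    simp only [Function.comp_apply]; push_cast; ring
  rw [h1, h2, Complex.ofReal_re, Complex.ofReal_re]
  exact Finset.sum_sq_le_sq_sum_of_nonneg fun i _ => hM.eigenvalues_nonneg i

lemma sum_weight_trace {S : Type} [Fintype S] (w : S → ℂ)
    {ι : Type} [Fintype ι] (F : S → Matrix ι ι ℂ) (C : Matrix ι ι ℂ) :
    ∑ s, w s * (F s * C).trace = ((∑ s, w s • F s) * C).trace := by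
  simp [Finset.sum_mul, Matrix.smul_mul, Matrix.trace_smul, smul_eq_mul]

lemma sum_swap3 {S : Type} [Fintype S] {m : ℕ} (g : S → Fin m → Fin m → ℂ) :
    ∑ s, ∑ i, ∑ j, g s i j = ∑ i, ∑ j, ∑ s, g s i j := by
  rw [Finset.sum_comm]
  exact Finset.sum_congr rfl fun i _ => Finset.sum_comm

lemma real_ineq (dd τ ρ : ℝ) (hd : 1 ≤ dd) (hτ0 : 0 ≤ τ) (hτ1 : τ ≤ 1) (hρ : ρ ≤ τ ^ 2) :
    (dd - 1) / (dd * (dd + 1)) * τ ≤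
      (dd⁻¹ - (dd ^ 2)⁻¹) * τ - ((dd * (dd + 1))⁻¹ * (τ ^ 2 + ρ) - (dd⁻¹ * τ) ^ 2) := by
  have h0 : (0:ℝ) < dd := lt_of_lt_of_le one_pos hd
  have h1 : (0:ℝ) < dd + 1 := by linarith
  have key : 0 ≤ (dd - 1) * τ + τ ^ 2 - dd * ρ := by
    nlinarith [mul_nonneg (mul_nonneg (sub_nonneg.mpr hd) hτ0) (sub_nonneg.mpr hτ1),
      mul_nonneg h0.le (sub_nonneg.mpr hρ)]
  rw [← sub_nonneg]
  have heq : (dd⁻¹ - (dd ^ 2)⁻¹) * τ - ((dd * (dd + 1))⁻¹ * (τ ^ 2 + ρ) - (dd⁻¹ * τ) ^ 2)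
      - (dd - 1) / (dd * (dd + 1)) * τ
      = ((dd - 1) * τ + τ ^ 2 - dd * ρ) / (dd ^ 2 * (dd + 1)) := by
    field_simp
    ring
  rw [heq]
  exact div_nonneg key (by positivity)

/-- Energy-dependent uncertainty principle for local altered Hamiltonians: for
orthogonal projections `Π_i` with `d_i = Tr Π_i ≥ 1`, a density matrix `ψ`, and a
finitely supported random tuple `(w_s, φ(s))` of rank-one states in the ranges of the
`Π_i` with the prescribed first moments, 2-design second moments, and pairwise
independence, the expected variance of the altered Hamiltonians `H_φ = Σ_i (Π_i + φ_i)`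
satisfies
`Σ_s w_s Var_ψ(H_{φ(s)}) ≥ Var_ψ(Σ_i (1 + 1/d_i) Π_i) + Σ_i ((d_i−1)/(d_i(d_i+1))) Tr(Π_i ψ)`. -/
theorem expected_variance_lower_bound
    {N m : ℕ} (hN : 1 ≤ N)
    (Pr : Fin m → Matrix (Fin N) (Fin N) ℂ)
    (hPrHerm : ∀ i, (Pr i).IsHermitian)
    (hPrIdem : ∀ i, Pr i * Pr i = Pr i)
    (d : Fin m → ℝ) (hd : ∀ i, d i = ((Pr i).trace).re) (hd1 : ∀ i, 1 ≤ d i)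
    (ψ : Matrix (Fin N) (Fin N) ℂ) (hψ : ψ.PosSemidef) (hψtr : ψ.trace = 1)
    (S : Type) [Fintype S] (w : S → ℝ)
    (hw0 : ∀ s, 0 ≤ w s) (hw1 : ∀ s, w s ≤ 1) (hwsum : ∑ s, w s = 1)
    (φ : S → Fin m → Matrix (Fin N) (Fin N) ℂ)
    (hφHerm : ∀ s i, (φ s i).IsHermitian)
    (hφIdem : ∀ s i, φ s i * φ s i = φ s i)
    (hφtr : ∀ s i, (φ s i).trace = 1)
    (hφrange : ∀ s i, Pr i * φ s i = φ s i ∧ φ s i * Pr i = φ s i)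
    (hfirst : ∀ i, ∑ s, (w s : ℂ) • φ s i = ((d i : ℂ))⁻¹ • Pr i)
    (hsecond : ∀ i, ∑ s, (w s : ℂ) • (φ s i ⊗ₖ φ s i) =
      ((d i : ℂ) * ((d i : ℂ) + 1))⁻¹ •
        ((Pr i ⊗ₖ Pr i) * (1 + swapMat N) * (Pr i ⊗ₖ Pr i)))
    (hpair : ∀ i j, i ≠ j → ∑ s, (w s : ℂ) • (φ s i ⊗ₖ φ s j) =
      (((d i : ℂ))⁻¹ • Pr i) ⊗ₖ (((d j : ℂ))⁻¹ • Pr j)) :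
    ∑ s, w s * matVar ψ (∑ i, (Pr i + φ s i)) ≥
      matVar ψ (∑ i, ((1 + 1 / d i : ℝ) : ℂ) • Pr i) +
        ∑ i, ((d i - 1) / (d i * (d i + 1))) * (((Pr i * ψ).trace).re) := by
  classical
  have hdpos : ∀ i, (0:ℝ) < d i := fun i => lt_of_lt_of_le one_pos (hd1 i)
  have hdC : ∀ i, (d i : ℂ) ≠ 0 := fun i => by
    exact_mod_cast (hdpos i).ne'
  have hd1C : ∀ i, (d i : ℂ) + 1 ≠ 0 := fun i => by
    have : ((d i + 1 : ℝ) : ℂ) ≠ 0 := by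
      exact_mod_cast (by linarith [hdpos i] : d i + 1 ≠ 0)
    simpa using this
  have hcast : ∀ k : Fin m, ((1 + 1/d k : ℝ):ℂ) = 1 + ((d k:ℂ))⁻¹ := fun k => by
    push_cast
    ring
  have hwC : (∑ s, (w s : ℂ)) = 1 := by exact_mod_cast congrArg Complex.ofReal hwsum
  -- first-moment consequence
  have hXC : ∀ i (C : Matrix (Fin N) (Fin N) ℂ),
      ∑ s, (w s:ℂ) * ((φ s i * C).trace) = (d i:ℂ)⁻¹ * (Pr i * C).trace := by
    intro i C
    rw [sum_weight_trace, hfirst i, Matrix.smul_mul, Matrix.trace_smul, smul_eq_mul]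
  have hXX : ∀ i j, i ≠ j →
      ∑ s, (w s:ℂ) * ((φ s i * φ s j * ψ).trace) =
        (d i:ℂ)⁻¹ * ((d j:ℂ)⁻¹ * (Pr i * Pr j * ψ).trace) := by
    intro i j hij
    have e : ∀ s, (φ s i * φ s j * ψ).trace = ((φ s i ⊗ₖ φ s j) * contrMat ψ).trace :=
      fun s => (trace_kron_contr _ _ _).symm
    simp_rw [e]
    rw [sum_weight_trace, hpair i j hij, Matrix.smul_kronecker, Matrix.kronecker_smul,
      Matrix.smul_mul, Matrix.smul_mul, Matrix.trace_smul, Matrix.trace_smul,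
      trace_kron_contr, smul_eq_mul, smul_eq_mul]
  have hTT : ∀ i j, i ≠ j →
      ∑ s, (w s:ℂ) * (((φ s i * ψ).trace) * ((φ s j * ψ).trace)) =
        ((d i:ℂ)⁻¹ * (Pr i * ψ).trace) * ((d j:ℂ)⁻¹ * (Pr j * ψ).trace) := by
    intro i j hij
    have e : ∀ s, ((φ s i * ψ).trace) * ((φ s j * ψ).trace)
        = ((φ s i ⊗ₖ φ s j) * (ψ ⊗ₖ ψ)).trace := by
      intro s
      rw [← Matrix.mul_kronecker_mul, Matrix.trace_kronecker]
    simp_rw [e]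
    rw [sum_weight_trace, hpair i j hij, Matrix.smul_kronecker, Matrix.kronecker_smul,
      Matrix.smul_mul, Matrix.smul_mul, Matrix.trace_smul, Matrix.trace_smul,
      ← Matrix.mul_kronecker_mul, Matrix.trace_kronecker, smul_eq_mul, smul_eq_mul]
    ring
  have hT2 : ∀ i,
      ∑ s, (w s:ℂ) * ((φ s i * ψ).trace) ^ 2 =
        ((d i:ℂ) * ((d i:ℂ) + 1))⁻¹ * (((Pr i * ψ).trace) ^ 2 + (Pr i * ψ * Pr i * ψ).trace) := by
    intro i
    have e : ∀ s, ((φ s i * ψ).trace) ^ 2 = ((φ s i ⊗ₖ φ s i) * (ψ ⊗ₖ ψ)).trace := by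
      intro s
      rw [← Matrix.mul_kronecker_mul, Matrix.trace_kronecker, pow_two]
    simp_rw [e]
    rw [sum_weight_trace, hsecond i, Matrix.smul_mul, Matrix.trace_smul, smul_eq_mul]
    congr 1
    have hexp : (Pr i ⊗ₖ Pr i) * (1 + swapMat N) * (Pr i ⊗ₖ Pr i)
        = (Pr i ⊗ₖ Pr i) + (Pr i ⊗ₖ Pr i) * swapMat N * (Pr i ⊗ₖ Pr i) := by
      rw [mul_add, mul_one, add_mul, ← Matrix.mul_kronecker_mul, hPrIdem i]
    rw [hexp, Matrix.add_mul, Matrix.trace_add]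
    have h1 : ((Pr i ⊗ₖ Pr i) * (ψ ⊗ₖ ψ)).trace = ((Pr i * ψ).trace) ^ 2 := by
      rw [← Matrix.mul_kronecker_mul, Matrix.trace_kronecker, pow_two]
    have h2 : ((Pr i ⊗ₖ Pr i) * swapMat N * (Pr i ⊗ₖ Pr i) * (ψ ⊗ₖ ψ)).trace
        = (Pr i * ψ * Pr i * ψ).trace := by
      have e1 : (Pr i ⊗ₖ Pr i) * swapMat N * (Pr i ⊗ₖ Pr i) * (ψ ⊗ₖ ψ)
          = ((Pr i ⊗ₖ Pr i) * swapMat N) * ((Pr i ⊗ₖ Pr i) * (ψ ⊗ₖ ψ)) := by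
        noncomm_ring
      rw [e1, Matrix.trace_mul_comm]
      have e1' : ((Pr i ⊗ₖ Pr i) * (ψ ⊗ₖ ψ)) * ((Pr i ⊗ₖ Pr i) * swapMat N)
          = (((Pr i ⊗ₖ Pr i) * (ψ ⊗ₖ ψ)) * (Pr i ⊗ₖ Pr i)) * swapMat N := by
        noncomm_ring
      rw [e1', Matrix.trace_mul_comm, ← Matrix.mul_kronecker_mul,
        ← Matrix.mul_kronecker_mul, trace_swap_kron]
      have e2 : (Pr i * ψ * Pr i) * (Pr i * ψ * Pr i)
          = (Pr i * ψ * (Pr i * Pr i) * ψ) * Pr i := by noncomm_ring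
      rw [e2, hPrIdem i, Matrix.trace_mul_comm]
      have e3 : Pr i * (Pr i * ψ * Pr i * ψ) = (Pr i * Pr i) * ψ * Pr i * ψ := by
        noncomm_ring
      rw [e3, hPrIdem i]
    rw [h1, h2]
  -- the key per-pair identities
  have hMain1 : ∀ i j,
      ∑ s, (w s:ℂ) * (((Pr i + φ s i) * (Pr j + φ s j) * ψ).trace)
        = (((1 + 1/d i : ℝ):ℂ) * ((1 + 1/d j : ℝ):ℂ)) * (Pr i * Pr j * ψ).trace
          + (if i = j then ((d i:ℂ)⁻¹ - ((d i:ℂ)^2)⁻¹) * (Pr i * ψ).trace else 0) := by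
    intro i j
    have hexp : ∀ s, ((Pr i + φ s i) * (Pr j + φ s j) * ψ).trace
        = (Pr i * Pr j * ψ).trace + (φ s j * (ψ * Pr i)).trace
          + (φ s i * (Pr j * ψ)).trace + (φ s i * φ s j * ψ).trace := by
      intro s
      have e0 : (Pr i + φ s i) * (Pr j + φ s j) * ψ
          = Pr i * Pr j * ψ + Pr i * φ s j * ψ + φ s i * (Pr j * ψ) + φ s i * φ s j * ψ := by
        noncomm_ring
      rw [e0, Matrix.trace_add, Matrix.trace_add, Matrix.trace_add]
      have e1 : (Pr i * φ s j * ψ).trace = (φ s j * (ψ * Pr i)).trace := by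
        rw [Matrix.trace_mul_cycle]
        exact Matrix.trace_mul_comm _ _
      rw [e1]
    simp_rw [hexp]
    simp only [mul_add, Finset.sum_add_distrib]
    rw [← Finset.sum_mul, hwC, one_mul, hXC j (ψ * Pr i), hXC i (Pr j * ψ)]
    have er1 : (Pr j * (ψ * Pr i)).trace = (Pr i * Pr j * ψ).trace := by
      rw [← Matrix.mul_assoc, Matrix.trace_mul_cycle]
    have er2 : (Pr i * (Pr j * ψ)).trace = (Pr i * Pr j * ψ).trace := by
      rw [Matrix.mul_assoc]
    rw [er1, er2]
    by_cases hij : i = j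
    · subst hij
      rw [if_pos rfl]
      have e4 : ∀ s, φ s i * φ s i * ψ = φ s i * ψ := fun s => by rw [hφIdem s i]
      simp_rw [e4]
      rw [hXC i ψ, hPrIdem i, hcast i]
      have := hdC i
      field_simp
      ring
    · rw [hXX i j hij, if_neg hij, hcast i, hcast j]
      ring
  have hMain2 : ∀ i j,
      ∑ s, (w s:ℂ) * ((((Pr i + φ s i) * ψ).trace) * (((Pr j + φ s j) * ψ).trace))
        = (((1 + 1/d i : ℝ):ℂ) * (Pr i * ψ).trace) * (((1 + 1/d j : ℝ):ℂ) * (Pr j * ψ).trace)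
          + (if i = j then
              (((d i:ℂ) * ((d i:ℂ)+1))⁻¹ * (((Pr i * ψ).trace)^2 + (Pr i * ψ * Pr i * ψ).trace)
                - ((d i:ℂ)⁻¹ * (Pr i * ψ).trace)^2)
            else 0) := by
    intro i j
    have hexp : ∀ (s : S) (k : Fin m), ((Pr k + φ s k) * ψ).trace
        = (Pr k * ψ).trace + (φ s k * ψ).trace := fun s k => by
      rw [Matrix.add_mul, Matrix.trace_add]
    simp_rw [hexp]
    have expand : ∀ s, ((Pr i * ψ).trace + (φ s i * ψ).trace)
          * ((Pr j * ψ).trace + (φ s j * ψ).trace)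
        = (Pr i * ψ).trace * (Pr j * ψ).trace
          + (Pr i * ψ).trace * (φ s j * ψ).trace
          + (φ s i * ψ).trace * (Pr j * ψ).trace
          + (φ s i * ψ).trace * (φ s j * ψ).trace := fun s => by ring
    simp_rw [expand]
    simp only [mul_add, Finset.sum_add_distrib]
    rw [← Finset.sum_mul, hwC, one_mul]
    have hmid1 : ∑ s, (w s:ℂ) * ((Pr i * ψ).trace * (φ s j * ψ).trace)
        = (Pr i * ψ).trace * ((d j:ℂ)⁻¹ * (Pr j * ψ).trace) := by
      rw [← hXC j ψ, Finset.mul_sum]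
      exact Finset.sum_congr rfl fun s _ => by ring
    have hmid2 : ∑ s, (w s:ℂ) * ((φ s i * ψ).trace * (Pr j * ψ).trace)
        = ((d i:ℂ)⁻¹ * (Pr i * ψ).trace) * (Pr j * ψ).trace := by
      rw [← hXC i ψ, Finset.sum_mul]
      exact Finset.sum_congr rfl fun s _ => by ring
    rw [hmid1, hmid2]
    by_cases hij : i = j
    · subst hij
      rw [if_pos rfl]
      have e5 : ∀ s : S, (w s:ℂ) * ((φ s i * ψ).trace * (φ s i * ψ).trace)
          = (w s:ℂ) * ((φ s i * ψ).trace) ^ 2 := fun s => by ring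
      simp_rw [e5]
      rw [hT2 i, hcast i]
      have := hdC i
      have := hd1C i
      field_simp
      ring
    · rw [hTT i j hij, if_neg hij, hcast i, hcast j]
      ring
  -- summed identities
  have hK1 : ∑ s, (w s:ℂ) * (((∑ i, (Pr i + φ s i)) * (∑ i, (Pr i + φ s i)) * ψ).trace)
      = ((∑ i, ((1 + 1/d i : ℝ):ℂ) • Pr i) * (∑ i, ((1 + 1/d i : ℝ):ℂ) • Pr i) * ψ).trace
        + ∑ i, ((d i:ℂ)⁻¹ - ((d i:ℂ)^2)⁻¹) * (Pr i * ψ).trace := by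
    have hL : ∀ s, ((∑ i, (Pr i + φ s i)) * (∑ i, (Pr i + φ s i)) * ψ).trace
        = ∑ i, ∑ j, ((Pr i + φ s i) * (Pr j + φ s j) * ψ).trace := by
      intro s
      rw [Finset.sum_mul, Finset.sum_mul, Matrix.trace_sum]
      refine Finset.sum_congr rfl fun i _ => ?_
      rw [Finset.mul_sum, Finset.sum_mul, Matrix.trace_sum]
    have hLs : ∀ s, (w s:ℂ) * (((∑ i, (Pr i + φ s i)) * (∑ i, (Pr i + φ s i)) * ψ).trace)
        = ∑ i, ∑ j, (w s:ℂ) * ((Pr i + φ s i) * (Pr j + φ s j) * ψ).trace := by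
      intro s
      rw [hL s]
      simp only [Finset.mul_sum]
    rw [Finset.sum_congr rfl fun s _ => hLs s,
      sum_swap3 (fun s i j => (w s:ℂ) * ((Pr i + φ s i) * (Pr j + φ s j) * ψ).trace)]
    simp_rw [hMain1]
    have hR : ((∑ i, ((1 + 1/d i : ℝ):ℂ) • Pr i) * (∑ i, ((1 + 1/d i : ℝ):ℂ) • Pr i) * ψ).trace
        = ∑ i, ∑ j, (((1 + 1/d i : ℝ):ℂ) * ((1 + 1/d j : ℝ):ℂ)) * (Pr i * Pr j * ψ).trace := by
      rw [Finset.sum_mul, Finset.sum_mul, Matrix.trace_sum]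
      refine Finset.sum_congr rfl fun i _ => ?_
      rw [Finset.mul_sum, Finset.sum_mul, Matrix.trace_sum]
      refine Finset.sum_congr rfl fun j _ => ?_
      simp only [Matrix.smul_mul, Matrix.mul_smul, Matrix.trace_smul, smul_eq_mul]
      ring
    rw [hR, ← Finset.sum_add_distrib]
    refine Finset.sum_congr rfl fun i _ => ?_
    rw [Finset.sum_add_distrib]
    congr 1
    simp
  have hK2 : ∑ s, (w s:ℂ) * (((∑ i, (Pr i + φ s i)) * ψ).trace) ^ 2
      = (((∑ i, ((1 + 1/d i : ℝ):ℂ) • Pr i) * ψ).trace) ^ 2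
        + ∑ i, (((d i:ℂ) * ((d i:ℂ)+1))⁻¹ * (((Pr i * ψ).trace)^2 + (Pr i * ψ * Pr i * ψ).trace)
            - ((d i:ℂ)⁻¹ * (Pr i * ψ).trace)^2) := by
    have hL : ∀ s, (((∑ i, (Pr i + φ s i)) * ψ).trace) ^ 2
        = ∑ i, ∑ j, ((Pr i + φ s i) * ψ).trace * ((Pr j + φ s j) * ψ).trace := by
      intro s
      rw [Finset.sum_mul, Matrix.trace_sum, pow_two, Finset.sum_mul_sum]
    have hLs : ∀ s, (w s:ℂ) * (((∑ i, (Pr i + φ s i)) * ψ).trace) ^ 2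
        = ∑ i, ∑ j, (w s:ℂ) * (((Pr i + φ s i) * ψ).trace * ((Pr j + φ s j) * ψ).trace) := by
      intro s
      rw [hL s]
      simp only [Finset.mul_sum]
    rw [Finset.sum_congr rfl fun s _ => hLs s,
      sum_swap3 (fun s i j => (w s:ℂ) *
        (((Pr i + φ s i) * ψ).trace * ((Pr j + φ s j) * ψ).trace))]
    simp_rw [hMain2]
    have hR : (((∑ i, ((1 + 1/d i : ℝ):ℂ) • Pr i) * ψ).trace) ^ 2
        = ∑ i, ∑ j, (((1 + 1/d i : ℝ):ℂ) * (Pr i * ψ).trace)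
            * (((1 + 1/d j : ℝ):ℂ) * (Pr j * ψ).trace) := by
      have hA : ((∑ i, ((1 + 1/d i : ℝ):ℂ) • Pr i) * ψ).trace
          = ∑ i, ((1 + 1/d i : ℝ):ℂ) * (Pr i * ψ).trace := by
        rw [Finset.sum_mul, Matrix.trace_sum]
        exact Finset.sum_congr rfl fun i _ => by
          simp only [Matrix.smul_mul, Matrix.trace_smul, smul_eq_mul]
      rw [hA, pow_two, Finset.sum_mul_sum]
    rw [hR, ← Finset.sum_add_distrib]
    refine Finset.sum_congr rfl fun i _ => ?_
    rw [Finset.sum_add_distrib]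
    congr 1
    simp
  -- hermiticity
  have hHerm : ∀ s, (∑ i, (Pr i + φ s i)).IsHermitian := by
    intro s
    show (∑ i, (Pr i + φ s i))ᴴ = ∑ i, (Pr i + φ s i)
    rw [Matrix.conjTranspose_sum]
    exact Finset.sum_congr rfl fun i _ => ((hPrHerm i).add (hφHerm s i)).eq
  have hAHerm : (∑ i, ((1 + 1/d i : ℝ):ℂ) • Pr i).IsHermitian := by
    show (∑ i, ((1 + 1/d i : ℝ):ℂ) • Pr i)ᴴ = ∑ i, ((1 + 1/d i : ℝ):ℂ) • Pr i
    rw [Matrix.conjTranspose_sum]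
    refine Finset.sum_congr rfl fun i _ => ?_
    rw [Matrix.conjTranspose_smul, (hPrHerm i).eq, Complex.star_def, Complex.conj_ofReal]
  -- passing to real parts
  have hHre : ∀ s : S, w s * matVar ψ (∑ i, (Pr i + φ s i))
      = ((w s:ℂ) * ((∑ i, (Pr i + φ s i)) * (∑ i, (Pr i + φ s i)) * ψ).trace).re
        - ((w s:ℂ) * (((∑ i, (Pr i + φ s i)) * ψ).trace)^2).re := by
    intro s
    have hr := trace_mul_real (hHerm s) hψ.1
    rw [matVar, mul_sub]
    congr 1
    · rw [Complex.re_ofReal_mul]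
    · conv_rhs => rw [hr]
      rw [← Complex.ofReal_pow, ← Complex.ofReal_mul, Complex.ofReal_re]
  have hA2 : ((((∑ i, ((1 + 1/d i : ℝ):ℂ) • Pr i) * ψ).trace) ^ 2).re
      = ((((∑ i, ((1 + 1/d i : ℝ):ℂ) • Pr i) * ψ).trace).re) ^ 2 := by
    have hAre := trace_mul_real hAHerm hψ.1
    conv_lhs => rw [hAre]
    rw [← Complex.ofReal_pow, Complex.ofReal_re]
  have hsum : ∑ s, w s * matVar ψ (∑ i, (Pr i + φ s i))
      = matVar ψ (∑ i, ((1 + 1/d i : ℝ):ℂ) • Pr i)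
        + ∑ i, (((d i:ℂ)⁻¹ - ((d i:ℂ)^2)⁻¹) * (Pr i * ψ).trace
            - (((d i:ℂ) * ((d i:ℂ)+1))⁻¹ * (((Pr i * ψ).trace)^2 + (Pr i * ψ * Pr i * ψ).trace)
              - ((d i:ℂ)⁻¹ * (Pr i * ψ).trace)^2)).re := by
    have h1 : ∑ s, w s * matVar ψ (∑ i, (Pr i + φ s i))
        = (∑ s, (w s:ℂ) * (((∑ i, (Pr i + φ s i)) * (∑ i, (Pr i + φ s i)) * ψ).trace)).re
          - (∑ s, (w s:ℂ) * (((∑ i, (Pr i + φ s i)) * ψ).trace)^2).re := by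
      rw [Complex.re_sum, Complex.re_sum, ← Finset.sum_sub_distrib]
      exact Finset.sum_congr rfl fun s _ => hHre s
    rw [h1, hK1, hK2, matVar]
    simp only [Complex.add_re, Complex.re_sum, Complex.sub_re]
    rw [hA2]
    simp only [Finset.sum_sub_distrib]
    ring
  rw [ge_iff_le, hsum]
  apply add_le_add le_rfl
  apply Finset.sum_le_sum
  intro i _
  set τ := ((Pr i * ψ).trace).re with hτ
  have htreal : (Pr i * ψ).trace = (τ:ℂ) := trace_mul_real (hPrHerm i) hψ.1
  have hMpsd : ((Pr i) * ψ * (Pr i)).PosSemidef := by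
    have := hψ.mul_mul_conjTranspose_same (Pr i)
    rwa [(hPrHerm i).eq] at this
  set ρ := ((Pr i * ψ * Pr i * ψ).trace).re with hρdef
  have hqreal : (Pr i * ψ * Pr i * ψ).trace = (ρ:ℂ) := trace_mul_real hMpsd.1 hψ.1
  have htr_eq : (Pr i * ψ * Pr i).trace = (Pr i * ψ).trace := by
    rw [Matrix.trace_mul_cycle, hPrIdem i]
  have hτ0 : 0 ≤ τ := by
    have := psd_trace_re_nonneg hMpsd
    rwa [htr_eq] at this
  have hτ1 : τ ≤ 1 := by
    have hQpsd : ((1 - Pr i) * ψ * (1 - Pr i)).PosSemidef := by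
      have := hψ.mul_mul_conjTranspose_same (1 - Pr i)
      rwa [Matrix.conjTranspose_sub, Matrix.conjTranspose_one, (hPrHerm i).eq] at this
    have h0 := psd_trace_re_nonneg hQpsd
    have hQQ : (1 - Pr i) * (1 - Pr i) = 1 - Pr i := by
      have e : (1 - Pr i) * (1 - Pr i) = 1 - Pr i - Pr i + Pr i * Pr i := by noncomm_ring
      rw [e, hPrIdem i]
      abel
    have hQtr : ((1 - Pr i) * ψ * (1 - Pr i)).trace = 1 - (Pr i * ψ).trace := by
      rw [Matrix.trace_mul_cycle, hQQ, Matrix.sub_mul, Matrix.one_mul,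
        Matrix.trace_sub, hψtr]
    rw [hQtr] at h0
    simp only [Complex.sub_re, Complex.one_re] at h0
    linarith
  have hρ : ρ ≤ τ ^ 2 := by
    have hsq := psd_trace_sq_le hMpsd
    rw [htr_eq] at hsq
    have hMM : ((Pr i * ψ * Pr i) * (Pr i * ψ * Pr i)).trace = (Pr i * ψ * Pr i * ψ).trace := by
      have e2 : (Pr i * ψ * Pr i) * (Pr i * ψ * Pr i)
          = (Pr i * ψ * (Pr i * Pr i) * ψ) * Pr i := by noncomm_ring
      rw [e2, hPrIdem i, Matrix.trace_mul_comm]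
      have e3 : Pr i * (Pr i * ψ * Pr i * ψ) = (Pr i * Pr i) * ψ * Pr i * ψ := by
        noncomm_ring
      rw [e3, hPrIdem i]
    rw [hMM] at hsq
    exact hsq
  have hγ : (((d i:ℂ)⁻¹ - ((d i:ℂ)^2)⁻¹) * (Pr i * ψ).trace
      - (((d i:ℂ) * ((d i:ℂ)+1))⁻¹ * (((Pr i * ψ).trace)^2 + (Pr i * ψ * Pr i * ψ).trace)
        - ((d i:ℂ)⁻¹ * (Pr i * ψ).trace)^2))
      = ((((d i)⁻¹ - ((d i)^2)⁻¹) * τ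
        - ((d i * (d i + 1))⁻¹ * (τ^2 + ρ) - ((d i)⁻¹ * τ)^2) : ℝ) : ℂ) := by
    rw [htreal, hqreal]
    push_cast
    ring
  rw [hγ, Complex.ofReal_re]
  exact real_ineq (d i) τ ρ (hd1 i) hτ0 hτ1 hρ
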